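/- If G is a finite group and G/Z(G) is isomorphic to the Frobenius group of order 42 with kernel C7 and complement C6, then |Cent(G)| = 9. -/

import Mathlib

/-- The set of distinct centralizers of elements of `G`. -/
def Cent (G : Type*) [Group G] : Set (Subgroup G) :=
  Set.range fun x : G => Subgroup.centralizer {x}

def addAutToMulAut (A : Type*) [AddGroup A] : Multiplicative (AddAut A) →* MulAut (Multiplicative A) where
  toFun f := AddEquiv.toMultiplicative (Multiplicative.toAdd f)
  map_one' := rfl
  map_mul' _ _ := rfl

/-- The action of `Aut(C7) ≅ C6` on `C7`. -/
def phi42 : (ZMod 7)ˣ →* MulAut (Multiplicative (ZMod 7)) :=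
  (addAutToMulAut (ZMod 7)).comp (DistribMulAction.toAddAut (ZMod 7)ˣ (ZMod 7))

/-- The Frobenius group `C7 ⋊ C6` of order 42, with `C6 ≅ Aut(C7)` acting faithfully. -/
abbrev F42 := Multiplicative (ZMod 7) ⋊[phi42] (ZMod 7)ˣ

def u2 : (ZMod 7)ˣ := ⟨2, 4, by decide, by decide⟩

def phi21 : ↥(Subgroup.zpowers u2) →* MulAut (Multiplicative (ZMod 7)) :=
  phi42.comp (Subgroup.zpowers u2).subtype

/-- The nonabelian group `C7 ⋊ C3` of order 21. -/
abbrev G21 := Multiplicative (ZMod 7) ⋊[phi21] ↥(Subgroup.zpowers u2)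

instance F42.fintype : Fintype F42 :=
  Fintype.ofEquiv (Multiplicative (ZMod 7) × (ZMod 7)ˣ)
    { toFun := fun p => ⟨p.1, p.2⟩
      invFun := fun g => (g.left, g.right)
      left_inv := fun _ => rfl
      right_inv := fun _ => rfl }

lemma isCyclic_zpowers {G : Type*} [Group G] (g : G) : IsCyclic ↥(Subgroup.zpowers g) :=
  ⟨⟨g, Subgroup.mem_zpowers g⟩, fun x => by
    obtain ⟨k, hk⟩ := Subgroup.mem_zpowers_iff.mp x.2
    exact ⟨k, Subtype.ext (by push_cast; exact hk)⟩⟩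

set_option maxHeartbeats 4000000 in
set_option maxRecDepth 10000 in
lemma F42.cyclic_centralizer : ∀ x : F42, x ≠ 1 → ∃ g : F42, g * x = x * g ∧
    ∀ y : F42, y * x = x * y → ∃ n : Fin 7, g ^ (n : ℕ) = y := by decide

set_option maxHeartbeats 4000000 in
lemma F42.card_image : (Finset.image
    (fun x : F42 => Finset.univ.filter (fun y => y * x = x * y)) Finset.univ).card = 9 := by
  decide

lemma F42.ncard_cent : (Cent F42).ncard = 9 := by
  classical
  set f : F42 → Finset F42 := fun x => Finset.univ.filter (fun y => y * x = x * y) with hf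
  have hcoe : ∀ x : F42, ((Subgroup.centralizer {x} : Subgroup F42) : Set F42) = ↑(f x) := by
    intro x
    ext y
    simp [hf, Subgroup.mem_centralizer_singleton_iff]
  have h1 : SetLike.coe '' Cent F42 = (fun s : Finset F42 => (↑s : Set F42)) '' Set.range f := by
    unfold Cent
    ext S
    simp only [Set.mem_image, Set.mem_range]
    constructor
    · rintro ⟨_, ⟨x, rfl⟩, rfl⟩; exact ⟨f x, ⟨x, rfl⟩, (hcoe x).symm⟩
    · rintro ⟨_, ⟨x, rfl⟩, rfl⟩; exact ⟨_, ⟨x, rfl⟩, hcoe x⟩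
  have h2 : (Cent F42).ncard = (SetLike.coe '' Cent F42).ncard :=
    (Set.ncard_image_of_injective _ SetLike.coe_injective).symm
  have h3 : (Set.range f).ncard = ((fun s : Finset F42 => (↑s : Set F42)) '' Set.range f).ncard :=
    (Set.ncard_image_of_injective _ Finset.coe_injective).symm
  have h4 : Set.range f = ↑(Finset.image f Finset.univ) := by
    rw [Finset.coe_image, Finset.coe_univ, Set.image_univ]
  rw [h2, h1, ← h3, h4, Set.ncard_coe_finset, F42.card_image]

lemma centralizer_eq_comap {G : Type*} [Group G] (π : G →* F42)
    (hker : π.ker = Subgroup.center G) (x : G) :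
    Subgroup.centralizer {x} = Subgroup.comap π (Subgroup.centralizer {π x}) := by
  ext y
  simp only [Subgroup.mem_comap, Subgroup.mem_centralizer_singleton_iff]
  constructor
  · intro h
    rw [← map_mul, h, map_mul]
  · intro h
    by_cases hx : π x = 1
    · have hx' : x ∈ Subgroup.center G := by rw [← hker]; exact hx
      exact Subgroup.mem_center_iff.mp hx' y
    · obtain ⟨g, hgx, hgen⟩ := F42.cyclic_centralizer (π x) hx
      set P := Subgroup.comap π (Subgroup.zpowers g) with hP
      have hxP : x ∈ P := by
        obtain ⟨n, hn⟩ := hgen (π x) rfl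
        exact Subgroup.mem_comap.mpr (Subgroup.mem_zpowers_iff.mpr ⟨(n : ℕ), by simpa using hn⟩)
      have hyP : y ∈ P := by
        obtain ⟨n, hn⟩ := hgen (π y) h
        exact Subgroup.mem_comap.mpr (Subgroup.mem_zpowers_iff.mpr ⟨(n : ℕ), by simpa using hn⟩)
      have := isCyclic_zpowers g
      set F : ↥P →* ↥(Subgroup.zpowers g) :=
        (π.comp P.subtype).codRestrict _ (fun p => p.2) with hF
      have hFker : F.ker ≤ Subgroup.center ↥P := by
        intro p hp
        have hp1 : π (p : G) = 1 := by
          have : ((F p : ↥(Subgroup.zpowers g)) : F42) = 1 := by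
            rw [hp]; rfl
          exact this
        have hpc : (p : G) ∈ Subgroup.center G := by rw [← hker]; exact hp1
        rw [Subgroup.mem_center_iff]
        intro q
        exact Subtype.ext (Subgroup.mem_center_iff.mp hpc q)
      have hcomm := commutative_of_cyclic_center_quotient F hFker
      exact Subtype.ext_iff.mp (hcomm ⟨y, hyP⟩ ⟨x, hxP⟩)

theorem stmt6 (G : Type*) [Group G] [Finite G]
    (h : Nonempty ((G ⧸ Subgroup.center G) ≃* F42)) :
    (Cent G).ncard = 9 := by
  obtain ⟨e⟩ := h
  set π : G →* F42 := e.toMonoidHom.comp (QuotientGroup.mk' (Subgroup.center G)) with hπ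
  have hsurj : Function.Surjective π :=
    e.surjective.comp (QuotientGroup.mk'_surjective _)
  have hker : π.ker = Subgroup.center G := by
    ext z
    simp only [hπ, MonoidHom.mem_ker, MonoidHom.comp_apply, MulEquiv.coe_toMonoidHom]
    rw [e.map_eq_one_iff]
    exact QuotientGroup.eq_one_iff z
  have key : ∀ x : G, Subgroup.centralizer {x} =
      Subgroup.comap π (Subgroup.centralizer {π x}) := centralizer_eq_comap π hker
  have h1 : Cent G = Subgroup.comap π '' Cent F42 := by
    unfold Cent
    ext H
    constructor
    · rintro ⟨x, rfl⟩
      exact ⟨Subgroup.centralizer {π x}, ⟨π x, rfl⟩, (key x).symm⟩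
    · rintro ⟨_, ⟨z, rfl⟩, rfl⟩
      obtain ⟨x, rfl⟩ := hsurj z
      exact ⟨x, key x⟩
  rw [h1, Set.ncard_image_of_injective _ (Subgroup.comap_injective hsurj)]
  exact F42.ncard_cent
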